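/- Let A be a nonabelian irreducible L-algebra over a finite-dimensional Lie algebra L. Then the core in A ⋊ L of E_L(A) equals the intersection of the centralizers C_L(B) over all L-algebras B that are L-equivalent to A; equivalently, E_L(A)_{A⋊L} = ∩ {C_L(A_α) : α ∈ Z¹(L,A)}, where E_L(A) = {x ∈ L : α(x) = 0 for all α ∈ Z¹(L,A)}. -/

import Mathlib

/-- The bracket of the semidirect sum `A ⋊ L`. -/
def sdBracket {K L A : Type*} [Field K] [LieRing L] [LieAlgebra K L]
    [LieRing A] [LieAlgebra K A] (θ : L →ₗ⁅K⁆ LieDerivation K A A)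
    (p q : A × L) : A × L :=
  (θ p.2 q.1 - θ q.2 p.1 + ⁅p.1, q.1⁆, ⁅p.2, q.2⁆)

/-- `1`-cocycles of `L` with values in the `L`-algebra `A`. -/
def IsCocycle {K L A : Type*} [Field K] [LieRing L] [LieAlgebra K L]
    [LieRing A] [LieAlgebra K A] (θ : L →ₗ⁅K⁆ LieDerivation K A A)
    (α : L →ₗ[K] A) : Prop :=
  ∀ x y : L, α ⁅x, y⁆ = θ x (α y) - θ y (α x) + ⁅α x, α y⁆

/-- Let `A` be a nonabelian irreducible `L`-algebra.  Then the core in `A ⋊ L`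
of `E_L(A) = {x ∈ L : α(x) = 0 for all α ∈ Z¹(L,A)}` equals
`⋂ {C_L(A_α) : α ∈ Z¹(L,A)}`, the intersection of the centralizers of all
`L`-algebras `L`-equivalent to `A`.  The core is described as the union of all
ideals of `A ⋊ L` contained in `E_L(A)` (viewed inside `A ⋊ L`). -/
theorem stmt15 {K L A : Type*} [Field K] [LieRing L] [LieAlgebra K L]
    [FiniteDimensional K L] [LieRing A] [LieAlgebra K A]
    (θ : L →ₗ⁅K⁆ LieDerivation K A A)
    (hirr : ∀ S : Submodule K A, (∀ (x : L), ∀ a ∈ S, θ x a ∈ S) → S = ⊥ ∨ S = ⊤)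
    (hnz : Nontrivial A)
    (hnonab : ¬ IsLieAbelian A) :
    {x : L | ∃ S : Submodule K (A × L),
        (∀ p ∈ S, ∀ q : A × L, sdBracket θ q p ∈ S) ∧
        (∀ p ∈ S, p.1 = 0 ∧ ∀ α : L →ₗ[K] A, IsCocycle θ α → α p.2 = 0) ∧
        ((0 : A), x) ∈ S} =
      {x : L | ∀ α : L →ₗ[K] A, IsCocycle θ α → ∀ a : A, ⁅α x, a⁆ + θ x a = 0} := by
  -- the zero map is a cocycle
  have hzero : IsCocycle θ (0 : L →ₗ[K] A) := by
    intro x y; simp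
  -- the center of A is trivial
  have hZ : ∀ z : A, (∀ a : A, ⁅z, a⁆ = 0) → z = 0 := by
    intro z hz
    set Zc : Submodule K A :=
      { carrier := {z | ∀ a : A, ⁅z, a⁆ = 0}
        add_mem' := fun hu hv a => by
          rw [add_lie, hu a, hv a, add_zero]
        zero_mem' := fun a => by simp
        smul_mem' := fun c u hu a => by
          rw [smul_lie, hu a, smul_zero] } with hZc
    have hinv : ∀ (x : L), ∀ a ∈ Zc, θ x a ∈ Zc := by
      intro x a ha b
      have h := (θ x).apply_lie_eq_add a b
      have h1 : θ x ⁅a, b⁆ = 0 := by rw [ha b, map_zero]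
      have h2 : ⁅a, θ x b⁆ = 0 := ha _
      rw [h1, h2] at h
      simpa using h.symm
    rcases hirr Zc hinv with h | h
    · have hm : z ∈ Zc := hz
      rw [h] at hm
      simpa using hm
    · exact absurd ⟨fun u v => by
        have : u ∈ Zc := by rw [h]; trivial
        exact this v⟩ hnonab
  -- the subspace of elements centralizing every twisted algebra
  set C : Submodule K L :=
    { carrier := {y | ∀ α : L →ₗ[K] A, IsCocycle θ α → ∀ a : A, ⁅α y, a⁆ + θ y a = 0}
      add_mem' := fun {u v} hu hv α hα a => by
        have h1 := hu α hα a
        have h2 := hv α hα a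
        have e1 : θ (u + v) a = θ u a + θ v a := by rw [map_add]; rfl
        rw [map_add, add_lie, e1, add_add_add_comm, h1, h2, add_zero]
      zero_mem' := fun α hα a => by simp
      smul_mem' := fun c u hu α hα a => by
        have h1 := hu α hα a
        have e1 : θ (c • u) a = c • θ u a := by rw [map_smul]; rfl
        rw [map_smul, smul_lie, e1, ← smul_add, h1, smul_zero] } with hCdef
  have hθC : ∀ y ∈ C, ∀ a : A, θ y a = 0 := by
    intro y hy a
    simpa using hy 0 hzero a
  have hαC : ∀ y ∈ C, ∀ α : L →ₗ[K] A, IsCocycle θ α → α y = 0 := by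
    intro y hy α hα
    refine hZ _ (fun a => ?_)
    have h := hy α hα a
    rw [hθC y hy a, add_zero] at h
    exact h
  ext x
  simp only [Set.mem_setOf_eq]
  constructor
  · rintro ⟨S, hid, hE, hxS⟩ α hα a
    have hαx : α x = 0 := (hE _ hxS).2 α hα
    have hb := hid _ hxS (a, 0)
    have h1 := (hE _ hb).1
    simp only [sdBracket, map_zero, lie_zero, zero_lie, LieDerivation.coe_zero,
      LinearMap.zero_apply, zero_sub, add_zero] at h1
    rw [hαx, zero_lie, zero_add]
    simpa using h1
  · intro hx
    refine ⟨(⊥ : Submodule K A).prod C, ?_, ?_, ?_⟩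
    · intro p hp q
      rw [Submodule.mem_prod] at hp ⊢
      obtain ⟨hp1, hp2⟩ := hp
      rw [Submodule.mem_bot] at hp1
      constructor
      · show θ q.2 p.1 - θ p.2 q.1 + ⁅q.1, p.1⁆ ∈ (⊥ : Submodule K A)
        rw [Submodule.mem_bot, hp1, hθC _ hp2, lie_zero, map_zero, sub_zero, add_zero]
      · show ⁅q.2, p.2⁆ ∈ C
        intro α hα a
        have hθp : ∀ b, θ p.2 b = 0 := hθC _ hp2
        have hθlie : θ ⁅q.2, p.2⁆ a = 0 := by
          rw [LieHom.map_lie, LieDerivation.commutator_apply, hθp a, map_zero, hθp,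
            sub_zero]
        have hαlie : α ⁅q.2, p.2⁆ = 0 := by
          rw [hα q.2 p.2, hαC _ hp2 α hα, lie_zero, map_zero, hθp, zero_sub, neg_zero,
            zero_add]
        rw [hαlie, hθlie, zero_lie, add_zero]
    · intro p hp
      rw [Submodule.mem_prod] at hp
      exact ⟨by simpa using hp.1, fun α hα => hαC _ hp.2 α hα⟩
    · exact Submodule.mem_prod.mpr ⟨by simp, hx⟩
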